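/- Let n, p be positive integers and let Φ ∈ ℝ^{n×p} with unit Euclidean norm columns u_1, …, u_p satisfy the (s,δ)-Restricted Isometry Property for some δ ∈ (0,1) and some s ≥ 2√n + 1. Define the 3-coloring of pairs {i,j} ⊆ {1,…,p}: white if |⟨u_i,u_j⟩| ≤ 1/(2√n), blue if ⟨u_i,u_j⟩ > 1/(2√n), red if ⟨u_i,u_j⟩ < −1/(2√n). Then every monochromatic clique (of any of the three colors) has size strictly less than 2n; i.e., the coloring is R(2n; 3) Ramsey. -/

import Mathlib

lemma aux_expand (n p : ℕ) (Φ : Matrix (Fin n) (Fin p) ℝ) (T : Finset (Fin p)) (c : ℝ) :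
    ∑ k : Fin n, (Φ.mulVec (fun l => if l ∈ T then c else 0) k) ^ 2
      = c ^ 2 * ∑ i ∈ T, ∑ j ∈ T, (∑ k : Fin n, Φ k i * Φ k j) := by
  have h1 : ∀ k, Φ.mulVec (fun l => if l ∈ T then c else 0) k = c * ∑ l ∈ T, Φ k l := by
    intro k
    simp only [Matrix.mulVec, dotProduct, mul_ite, mul_zero, Finset.sum_ite_mem,
      Finset.univ_inter, Finset.mul_sum]
    exact Finset.sum_congr rfl fun l _ => mul_comm _ _
  simp only [h1, mul_pow]
  rw [← Finset.mul_sum]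
  congr 1
  have h2 : ∀ k : Fin n, (∑ l ∈ T, Φ k l) ^ 2 = ∑ i ∈ T, ∑ j ∈ T, Φ k i * Φ k j := by
    intro k
    rw [sq, Finset.sum_mul_sum]
  simp only [h2]
  rw [Finset.sum_comm]
  exact Finset.sum_congr rfl fun i _ => Finset.sum_comm

lemma aux_white (n p : ℕ) (hn : 0 < n)
    (Φ : Matrix (Fin n) (Fin p) ℝ)
    (hcol : ∀ j : Fin p, ∑ k : Fin n, (Φ k j) ^ 2 = 1)
    (C : Finset (Fin p))
    (hw : ∀ i ∈ C, ∀ j ∈ C, i ≠ j →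
      |∑ k : Fin n, Φ k i * Φ k j| ≤ 1 / (2 * Real.sqrt n)) :
    C.card < 2 * n := by
  by_contra hcon
  push_neg at hcon
  set m := C.card with hm
  set B : Fin n → Fin n → ℝ := fun k l => ∑ i ∈ C, Φ k i * Φ l i with hB
  set g : Fin p → Fin p → ℝ := fun i j => ∑ k : Fin n, Φ k i * Φ k j with hg
  have htr : ∑ k : Fin n, B k k = (m : ℝ) := by
    simp only [hB]
    rw [Finset.sum_comm]
    have : ∀ i ∈ C, ∑ k : Fin n, Φ k i * Φ k i = 1 := by
      intro i _
      simpa [sq] using hcol i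
    rw [Finset.sum_congr rfl this]
    simp
    exact hm.symm
  have hcs : (m : ℝ) ^ 2 ≤ (n : ℝ) * ∑ k : Fin n, (B k k) ^ 2 := by
    have := sq_sum_le_card_mul_sum_sq (s := (Finset.univ : Finset (Fin n)))
      (f := fun k => B k k)
    rw [htr] at this
    simpa using this
  have hdiag : ∑ k : Fin n, (B k k) ^ 2 ≤ ∑ k : Fin n, ∑ l : Fin n, (B k l) ^ 2 := by
    refine Finset.sum_le_sum fun k _ => ?_
    exact Finset.single_le_sum (f := fun l => (B k l) ^ 2) (fun l _ => sq_nonneg _)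
      (Finset.mem_univ k)
  have hfrob : ∑ k : Fin n, ∑ l : Fin n, (B k l) ^ 2
      = ∑ i ∈ C, ∑ j ∈ C, (g i j) ^ 2 := by
    have lhs : ∀ k l, (B k l) ^ 2
        = ∑ i ∈ C, ∑ j ∈ C, (Φ k i * Φ k j) * (Φ l i * Φ l j) := by
      intro k l
      rw [hB, sq, Finset.sum_mul_sum]
      exact Finset.sum_congr rfl fun i _ => Finset.sum_congr rfl fun j _ => by ring
    have rhs : ∀ i j, (g i j) ^ 2
        = ∑ k : Fin n, ∑ l : Fin n, (Φ k i * Φ k j) * (Φ l i * Φ l j) := by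
      intro i j
      rw [hg, sq, Finset.sum_mul_sum]
    simp only [lhs, rhs]
    calc ∑ k : Fin n, ∑ l : Fin n, ∑ i ∈ C, ∑ j ∈ C,
            Φ k i * Φ k j * (Φ l i * Φ l j)
        = ∑ k : Fin n, ∑ i ∈ C, ∑ l : Fin n, ∑ j ∈ C,
            Φ k i * Φ k j * (Φ l i * Φ l j) :=
          Finset.sum_congr rfl fun k _ => Finset.sum_comm
      _ = ∑ i ∈ C, ∑ k : Fin n, ∑ l : Fin n, ∑ j ∈ C,
            Φ k i * Φ k j * (Φ l i * Φ l j) := Finset.sum_comm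
      _ = ∑ i ∈ C, ∑ k : Fin n, ∑ j ∈ C, ∑ l : Fin n,
            Φ k i * Φ k j * (Φ l i * Φ l j) :=
          Finset.sum_congr rfl fun i _ => Finset.sum_congr rfl fun k _ => Finset.sum_comm
      _ = ∑ i ∈ C, ∑ j ∈ C, ∑ k : Fin n, ∑ l : Fin n,
            Φ k i * Φ k j * (Φ l i * Φ l j) :=
          Finset.sum_congr rfl fun i _ => Finset.sum_comm
  have hN : (1:ℝ) ≤ (n:ℝ) := by exact_mod_cast hn
  have hM : 2*(n:ℝ) ≤ (m:ℝ) := by exact_mod_cast hcon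
  have hm2 : 2 ≤ m := le_trans (by omega) hcon
  have h4 : (1/(2*Real.sqrt n))^2 = 1/(4*(n:ℝ)) := by
    rw [div_pow, mul_pow, Real.sq_sqrt (by positivity)]
    norm_num
  have hgsq : ∀ i ∈ C, ∀ j ∈ C, i ≠ j → (g i j)^2 ≤ 1/(4*(n:ℝ)) := by
    intro i hi j hj hij
    rw [← h4, ← sq_abs]
    exact pow_le_pow_left₀ (abs_nonneg _) (hw i hi j hj hij) 2
  have hgii : ∀ i ∈ C, g i i = 1 := by
    intro i _
    simpa [hg, sq] using hcol i
  have hbound : ∑ i ∈ C, ∑ j ∈ C, (g i j)^2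
      ≤ (m:ℝ) * (1 + ((m:ℝ)-1) * (1/(4*(n:ℝ)))) := by
    have step : ∀ i ∈ C, ∑ j ∈ C, (g i j)^2 ≤ 1 + ((m:ℝ)-1) * (1/(4*(n:ℝ))) := by
      intro i hi
      rw [← Finset.add_sum_erase _ _ hi, hgii i hi, one_pow]
      gcongr
      calc ∑ j ∈ C.erase i, (g i j)^2
          ≤ (C.erase i).card • (1/(4*(n:ℝ))) := by
            refine Finset.sum_le_card_nsmul _ _ _ fun j hj => ?_
            exact hgsq i hi j (Finset.mem_of_mem_erase hj)
              (fun h => (Finset.ne_of_mem_erase hj) h.symm)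
        _ = ((m:ℝ)-1) * (1/(4*(n:ℝ))) := by
            rw [Finset.card_erase_of_mem hi, nsmul_eq_mul, Nat.cast_sub (by omega)]
            norm_num
            exact Or.inl hm.symm
    calc ∑ i ∈ C, ∑ j ∈ C, (g i j)^2
        ≤ ∑ _i ∈ C, (1 + ((m:ℝ)-1) * (1/(4*(n:ℝ)))) := Finset.sum_le_sum step
      _ = (m:ℝ) * (1 + ((m:ℝ)-1) * (1/(4*(n:ℝ)))) := by
          rw [Finset.sum_const, nsmul_eq_mul]
  have hchain : (m:ℝ)^2 ≤ (n:ℝ) * ((m:ℝ) * (1 + ((m:ℝ)-1) * (1/(4*(n:ℝ))))) := by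
    calc (m:ℝ)^2 ≤ (n : ℝ) * ∑ k : Fin n, (B k k) ^ 2 := hcs
      _ ≤ (n : ℝ) * ∑ i ∈ C, ∑ j ∈ C, (g i j)^2 := by
          rw [← hfrob]
          exact mul_le_mul_of_nonneg_left hdiag (by positivity)
      _ ≤ _ := mul_le_mul_of_nonneg_left hbound (by positivity)
  have hne : (n:ℝ) ≠ 0 := by positivity
  have key2 : (m:ℝ)^2 ≤ (n:ℝ)*(m:ℝ) + (m:ℝ)*((m:ℝ)-1)/4 := by
    have heq : (n:ℝ) * ((m:ℝ) * (1 + ((m:ℝ)-1) * (1/(4*(n:ℝ)))))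
        = (n:ℝ)*(m:ℝ) + (m:ℝ)*((m:ℝ)-1)/4 := by
      field_simp
    linarith [heq ▸ hchain]
  nlinarith [key2, hM, hN, mul_le_mul_of_nonneg_right hM (by linarith : (0:ℝ) ≤ (m:ℝ))]

lemma aux_core (n p : ℕ)
    (Φ : Matrix (Fin n) (Fin p) ℝ)
    (hcol : ∀ j : Fin p, ∑ k : Fin n, (Φ k j) ^ 2 = 1)
    (s : ℕ) (δ : ℝ) (hδ : δ ∈ Set.Ioo (0 : ℝ) 1)
    (hRIP : ∀ x : Fin p → ℝ,
      (Finset.univ.filter (fun i => x i ≠ 0)).card ≤ s →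
      ∑ i : Fin p, (x i) ^ 2 = 1 →
      |(∑ k : Fin n, (Φ.mulVec x k) ^ 2) - 1| ≤ δ)
    (C : Finset (Fin p)) (t : ℕ) (ht2 : 2 ≤ t) (hts : t ≤ s) (htC : t ≤ C.card)
    (c₀ : ℝ) (hlow : 1 ≤ ((t:ℝ) - 1) * c₀)
    (hcase : (∀ i ∈ C, ∀ j ∈ C, i ≠ j → c₀ ≤ ∑ k : Fin n, Φ k i * Φ k j) ∨
             (∀ i ∈ C, ∀ j ∈ C, i ≠ j → (∑ k : Fin n, Φ k i * Φ k j) ≤ -c₀)) :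
    False := by
  obtain ⟨T, hTC, hTcard⟩ := Finset.exists_subset_card_eq htC
  have htpos : (0:ℝ) < t := by positivity
  set x : Fin p → ℝ := fun l => if l ∈ T then 1 / Real.sqrt t else 0 with hx
  have hc0 : (1 / Real.sqrt t) ^ 2 = 1 / (t:ℝ) := by
    rw [div_pow, Real.sq_sqrt (le_of_lt htpos)]
    norm_num
  have hcne : (1 / Real.sqrt t : ℝ) ≠ 0 := by positivity
  have hsupp : (Finset.univ.filter (fun i => x i ≠ 0)) = T := by
    ext l
    simp only [Finset.mem_filter, Finset.mem_univ, true_and, hx]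
    have ht0 : t ≠ 0 := by omega
    by_cases hl : l ∈ T <;> simp [hl, hcne, ht0]
  have hnorm : ∑ i : Fin p, (x i) ^ 2 = 1 := by
    simp only [hx, apply_ite (· ^ 2), zero_pow (two_ne_zero), Finset.sum_ite_mem,
      Finset.univ_inter, Finset.sum_const, hTcard, nsmul_eq_mul, hc0]
    field_simp
  have hrip := hRIP x (by rw [hsupp, hTcard]; exact hts) hnorm
  have hval : ∑ k : Fin n, (Φ.mulVec x k) ^ 2
      = (1/(t:ℝ)) * ∑ i ∈ T, ∑ j ∈ T, (∑ k : Fin n, Φ k i * Φ k j) := by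
    rw [hx, aux_expand, hc0]
  have hgii : ∀ i, (∑ k : Fin n, Φ k i * Φ k i) = 1 := by
    intro i
    simpa [sq] using hcol i
  have htm1 : ((t - 1 : ℕ) : ℝ) = (t:ℝ) - 1 := by
    rw [Nat.cast_sub (by omega)]
    norm_num
  rcases hcase with hb | hr
  · have hsum : (2:ℝ) * t ≤ ∑ i ∈ T, ∑ j ∈ T, (∑ k : Fin n, Φ k i * Φ k j) := by
      have step : ∀ i ∈ T, (2:ℝ) ≤ ∑ j ∈ T, (∑ k : Fin n, Φ k i * Φ k j) := by
        intro i hi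
        rw [← Finset.add_sum_erase _ _ hi, hgii i]
        have : ((t:ℝ) - 1) * c₀ ≤ ∑ j ∈ T.erase i, (∑ k : Fin n, Φ k i * Φ k j) := by
          have := Finset.card_nsmul_le_sum (T.erase i)
            (fun j => ∑ k : Fin n, Φ k i * Φ k j) c₀
            (fun j hj => hb i (hTC hi) j (hTC (Finset.mem_of_mem_erase hj))
              (fun h => (Finset.ne_of_mem_erase hj) h.symm))
          rwa [Finset.card_erase_of_mem hi, hTcard, nsmul_eq_mul, htm1] at this
        linarith
      calc (2:ℝ) * t = ∑ _i ∈ T, (2:ℝ) := by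
            rw [Finset.sum_const, hTcard, nsmul_eq_mul]; ring
        _ ≤ _ := Finset.sum_le_sum step
    have h2 : (2:ℝ) ≤ ∑ k : Fin n, (Φ.mulVec x k) ^ 2 := by
      rw [hval]
      rw [div_mul_eq_mul_div, le_div_iff₀ htpos]
      linarith
    have := abs_le.mp hrip
    linarith [hδ.2, this.2]
  · have hsum : ∑ i ∈ T, ∑ j ∈ T, (∑ k : Fin n, Φ k i * Φ k j) ≤ 0 := by
      have step : ∀ i ∈ T, ∑ j ∈ T, (∑ k : Fin n, Φ k i * Φ k j) ≤ 0 := by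
        intro i hi
        rw [← Finset.add_sum_erase _ _ hi, hgii i]
        have : ∑ j ∈ T.erase i, (∑ k : Fin n, Φ k i * Φ k j) ≤ ((t:ℝ) - 1) * (-c₀) := by
          have := Finset.sum_le_card_nsmul (T.erase i)
            (fun j => ∑ k : Fin n, Φ k i * Φ k j) (-c₀)
            (fun j hj => hr i (hTC hi) j (hTC (Finset.mem_of_mem_erase hj))
              (fun h => (Finset.ne_of_mem_erase hj) h.symm))
          rwa [Finset.card_erase_of_mem hi, hTcard, nsmul_eq_mul, htm1] at this
        nlinarith
      calc ∑ i ∈ T, ∑ j ∈ T, (∑ k : Fin n, Φ k i * Φ k j)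
          ≤ ∑ _i ∈ T, (0:ℝ) := Finset.sum_le_sum step
        _ = 0 := by simp
    have h0 : ∑ k : Fin n, (Φ.mulVec x k) ^ 2 ≤ 0 := by
      rw [hval]
      apply mul_nonpos_of_nonneg_of_nonpos (by positivity) hsum
    have := abs_le.mp hrip
    linarith [hδ.2, this.1]

lemma aux_t (n : ℕ) (hn2 : 2 ≤ n) (s : ℕ) (hs : 2 * Real.sqrt n + 1 ≤ (s:ℝ)) :
    ∃ t : ℕ, 2 ≤ t ∧ t ≤ s ∧ t ≤ 2*n ∧ 2 * Real.sqrt n ≤ (t:ℝ) - 1 := by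
  have hsa : Real.sqrt n ^ 2 = n := Real.sq_sqrt (by positivity)
  have hs0 : (0:ℝ) ≤ Real.sqrt n := Real.sqrt_nonneg _
  have hn2' : (2:ℝ) ≤ (n:ℝ) := by exact_mod_cast hn2
  have hsqn : (1:ℝ) ≤ Real.sqrt n := by nlinarith
  refine ⟨⌈2 * Real.sqrt n⌉₊ + 1, ?_, ?_, ?_, ?_⟩
  · have : 1 ≤ ⌈2 * Real.sqrt n⌉₊ := by
      rw [Nat.one_le_ceil_iff]
      positivity
    omega
  · have hs3 : 3 ≤ s := by
      have : (3:ℝ) ≤ (s:ℝ) := by nlinarith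
      exact_mod_cast this
    have : ⌈2 * Real.sqrt n⌉₊ ≤ s - 1 := by
      rw [Nat.ceil_le]
      rw [Nat.cast_sub (by omega)]
      push_cast
      linarith
    omega
  · have : ⌈2 * Real.sqrt n⌉₊ ≤ 2*n - 1 := by
      rw [Nat.ceil_le]
      rw [Nat.cast_sub (by omega)]
      push_cast
      nlinarith [sq_nonneg (Real.sqrt n - 1)]
    omega
  · push_cast
    have := Nat.le_ceil (2 * Real.sqrt n)
    linarith

lemma aux_one (p : ℕ) (Φ : Matrix (Fin 1) (Fin p) ℝ)
    (hcol : ∀ j : Fin p, ∑ k : Fin 1, (Φ k j) ^ 2 = 1) (i j : Fin p) :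
    (∑ k : Fin 1, Φ k i * Φ k j) ^ 2 = 1 := by
  have hi : Φ 0 i ^ 2 = 1 := by simpa using hcol i
  have hj : Φ 0 j ^ 2 = 1 := by simpa using hcol j
  simp only [Fin.sum_univ_one]
  rw [mul_pow, hi, hj, one_mul]

/-- If `Φ` with unit norm columns satisfies the `(s,δ)`-RIP with
`δ ∈ (0,1)` and `s ≥ 2√n + 1`, then for the 3-coloring (white if
`|⟨uᵢ,uⱼ⟩| ≤ 1/(2√n)`, blue if `⟨uᵢ,uⱼ⟩ > 1/(2√n)`, red if
`⟨uᵢ,uⱼ⟩ < -1/(2√n)`) every monochromatic clique of any color has size `< 2n`;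
i.e. the coloring is `R(2n; 3)` Ramsey. -/
theorem rip_implies_R2n_three_ramsey
    (n p : ℕ) (hn : 0 < n) (hp : 0 < p)
    (Φ : Matrix (Fin n) (Fin p) ℝ)
    (hcol : ∀ j : Fin p, ∑ k : Fin n, (Φ k j) ^ 2 = 1)
    (s : ℕ) (δ : ℝ) (hδ : δ ∈ Set.Ioo (0 : ℝ) 1)
    (hs : 2 * Real.sqrt n + 1 ≤ (s : ℝ))
    (hRIP : ∀ x : Fin p → ℝ,
      (Finset.univ.filter (fun i => x i ≠ 0)).card ≤ s →
      ∑ i : Fin p, (x i) ^ 2 = 1 →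
      |(∑ k : Fin n, (Φ.mulVec x k) ^ 2) - 1| ≤ δ) :
    (∀ C : Finset (Fin p),
      (∀ i ∈ C, ∀ j ∈ C, i ≠ j →
        |∑ k : Fin n, Φ k i * Φ k j| ≤ 1 / (2 * Real.sqrt n)) →
      C.card < 2 * n) ∧
    (∀ C : Finset (Fin p),
      (∀ i ∈ C, ∀ j ∈ C, i ≠ j →
        1 / (2 * Real.sqrt n) < ∑ k : Fin n, Φ k i * Φ k j) →
      C.card < 2 * n) ∧
    (∀ C : Finset (Fin p),
      (∀ i ∈ C, ∀ j ∈ C, i ≠ j →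
        (∑ k : Fin n, Φ k i * Φ k j) < -(1 / (2 * Real.sqrt n))) →
      C.card < 2 * n) := by
  have hsp : (0:ℝ) < Real.sqrt n := Real.sqrt_pos.mpr (by exact_mod_cast hn)
  refine ⟨fun C hw => aux_white n p hn Φ hcol C hw, ?_, ?_⟩
  · -- blue
    intro C hb
    by_contra hcon
    push_neg at hcon
    rcases Nat.lt_or_ge n 2 with h1 | h2
    · have hn1 : n = 1 := by omega
      subst hn1
      have hs1 : Real.sqrt (1:ℕ) = 1 := by simp
      have hs3 : 3 ≤ s := by
        have : (3:ℝ) ≤ (s:ℝ) := by rw [hs1] at hs; linarith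
        exact_mod_cast this
      refine aux_core 1 p Φ hcol s δ hδ hRIP C 2 le_rfl (by omega) (by omega) 1
        (by norm_num) (Or.inl ?_)
      intro i hi j hj hij
      have h2 := aux_one p Φ hcol i j
      have h3 := hb i hi j hj hij
      rw [hs1] at h3
      norm_num at h3
      simp only [Fin.sum_univ_one] at h2 ⊢
      nlinarith [h2, h3]
    · obtain ⟨t, ht2, hts, htn, htlb⟩ := aux_t n h2 s hs
      refine aux_core n p Φ hcol s δ hδ hRIP C t ht2 hts (le_trans htn hcon)
        (1/(2*Real.sqrt n)) ?_ (Or.inl fun i hi j hj hij => le_of_lt (hb i hi j hj hij))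
      rw [mul_one_div, le_div_iff₀ (by positivity)]
      linarith
  · -- red
    intro C hr
    by_contra hcon
    push_neg at hcon
    rcases Nat.lt_or_ge n 2 with h1 | h2
    · have hn1 : n = 1 := by omega
      subst hn1
      have hs1 : Real.sqrt (1:ℕ) = 1 := by simp
      have hs3 : 3 ≤ s := by
        have : (3:ℝ) ≤ (s:ℝ) := by rw [hs1] at hs; linarith
        exact_mod_cast this
      refine aux_core 1 p Φ hcol s δ hδ hRIP C 2 le_rfl (by omega) (by omega) 1
        (by norm_num) (Or.inr ?_)
      intro i hi j hj hij
      have h2 := aux_one p Φ hcol i j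
      have h3 := hr i hi j hj hij
      rw [hs1] at h3
      norm_num at h3
      simp only [Fin.sum_univ_one] at h2 ⊢
      nlinarith [h2, h3]
    · obtain ⟨t, ht2, hts, htn, htlb⟩ := aux_t n h2 s hs
      refine aux_core n p Φ hcol s δ hδ hRIP C t ht2 hts (le_trans htn hcon)
        (1/(2*Real.sqrt n)) ?_
        (Or.inr fun i hi j hj hij => le_of_lt (by simpa using hr i hi j hj hij))
      rw [mul_one_div, le_div_iff₀ (by positivity)]
      linarith
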